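/- Let V be an n-dimensional vector space over a field K, let d ≥ 2, and let W_1,…,W_d be subspaces of V with dim W_i = r_i such that r_0 := ∑_{i=1}^d r_i − (d−1)n > 0 and dim(∩_{i=1}^d W_i) = r_0. Put W_0 = ∩_{i=1}^d W_i and U_j = ∩_{i ≠ j} W_i for j = 1,…,d. Then dim U_j = n − r_j + r_0 for every j, and for any choice of subspaces U'_j with U_j = W_0 ⊕ U'_j (so dim U'_j = n − r_j), V is the internal direct sum V = W_0 ⊕ U'_1 ⊕ … ⊕ U'_d. -/
import Mathlib


open Module

/-- Let `V` be an `n`-dimensional vector space over a field `K`, let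
`d ≥ 2`, and let `W₁, …, W_d` be subspaces of `V` with `dim Wᵢ = rᵢ` such that
`r₀ := ∑ rᵢ − (d − 1)n > 0` and `dim (⋂ᵢ Wᵢ) = r₀`.  Put `W₀ = ⋂ᵢ Wᵢ` and
`Uⱼ = ⋂_{i ≠ j} Wᵢ` for `j = 1, …, d`.  Then `dim Uⱼ = n − rⱼ + r₀` for every `j`, and for
any choice of subspaces `U'ⱼ` with `Uⱼ = W₀ ⊕ U'ⱼ` (so `dim U'ⱼ = n − rⱼ`), `V` is the
internal direct sum `V = W₀ ⊕ U'₁ ⊕ … ⊕ U'_d` (here encoded by the family indexed by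
`Option (Fin d)` sending `none` to `W₀` and `some j` to `U'ⱼ`). -/
theorem complementary_subspaces_direct_sum_positive_dim
    {K V : Type*} [Field K] [AddCommGroup V] [Module K V] [FiniteDimensional K V]
    {n : ℕ} (hn : finrank K V = n)
    {d : ℕ} (hd : 2 ≤ d)
    (W : Fin d → Submodule K V) (r : Fin d → ℕ)
    (hdim : ∀ i, finrank K (W i) = r i)
    (r₀ : ℕ) (hr₀pos : 0 < r₀)
    (hr₀ : ∑ i, r i = (d - 1) * n + r₀)
    (W₀ : Submodule K V) (hW₀ : W₀ = ⨅ i, W i)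
    (hdimW₀ : finrank K W₀ = r₀)
    (U : Fin d → Submodule K V)
    (hU : ∀ j, U j = ⨅ i ∈ ({j}ᶜ : Set (Fin d)), W i)
    (U' : Fin d → Submodule K V)
    (hdisj : ∀ j, W₀ ⊓ U' j = ⊥)
    (hcompl : ∀ j, W₀ ⊔ U' j = U j) :
    (∀ j, finrank K (U j) = n - r j + r₀) ∧
    DirectSum.IsInternal (fun o : Option (Fin d) => o.elim W₀ U') := by
  classical
  -- basic dimension facts
  have hrle : ∀ i, r i ≤ n := fun i => by
    rw [← hdim i, ← hn]; exact Submodule.finrank_le _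
  -- description of `U j` via a Finset infimum
  have hUf : ∀ j, U j = ⨅ i ∈ Finset.univ.erase j, W i := by
    intro j
    rw [hU j]
    apply le_antisymm
    · refine le_iInf₂ fun i hi => iInf₂_le i ?_
      simpa using (Finset.mem_erase.mp hi).1
    · refine le_iInf₂ fun i hi => iInf₂_le i ?_
      exact Finset.mem_erase.mpr ⟨by simpa using hi, Finset.mem_univ i⟩
  -- lower bound on dimensions of intersections
  have key : ∀ s : Finset (Fin d), s.Nonempty →
      (∑ i ∈ s, r i) + n ≤ finrank K ↥(⨅ i ∈ s, W i) + s.card * n := by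
    intro s hs
    induction hs using Finset.Nonempty.cons_induction with
    | singleton i => rw [Finset.iInf_singleton]; simp [hdim i]
    | cons a s ha hs ih =>
      have h1 : (⨅ i ∈ Finset.cons a s ha, W i) = W a ⊓ ⨅ i ∈ s, W i := by
        rw [Finset.cons_eq_insert, Finset.iInf_insert]
      have h2 := Submodule.finrank_sup_add_finrank_inf_eq (W a) (⨅ i ∈ s, W i)
      have h3 : finrank K ↥(W a ⊔ ⨅ i ∈ s, W i) ≤ n := hn ▸ Submodule.finrank_le _
      rw [hdim a] at h2
      rw [Finset.sum_cons, Finset.card_cons, h1, add_mul, one_mul]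
      omega
  -- `W₀ = U j ⊓ W j`
  have hW₀U : ∀ j, U j ⊓ W j = W₀ := by
    intro j
    rw [hW₀, hU j]
    apply le_antisymm
    · refine le_iInf fun i => ?_
      rcases eq_or_ne i j with rfl | hij
      · exact inf_le_right
      · exact inf_le_left.trans (iInf₂_le i hij)
    · exact le_inf (le_iInf₂ fun i _ => iInf_le _ i) (iInf_le _ j)
  -- the dimension of `U j`
  have hdimU : ∀ j, finrank K ↥(U j) + r j = n + r₀ := by
    intro j
    have h1 := key (Finset.univ.erase j) ⟨(Finset.univ.erase j).min' ?_ , Finset.min'_mem _ _⟩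
    swap
    · refine Finset.card_pos.mp ?_
      rw [Finset.card_erase_of_mem (Finset.mem_univ j), Finset.card_univ, Fintype.card_fin]
      omega
    have hcard : (Finset.univ.erase j).card = d - 1 := by
      rw [Finset.card_erase_of_mem (Finset.mem_univ j), Finset.card_univ, Fintype.card_fin]
    have hsum : (∑ i ∈ Finset.univ.erase j, r i) + r j = (d - 1) * n + r₀ := by
      rw [Finset.sum_erase_add _ _ (Finset.mem_univ j)]; exact hr₀
    have h2 := Submodule.finrank_sup_add_finrank_inf_eq (U j) (W j)
    rw [hW₀U j, hdimW₀, hdim j] at h2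
    have h3 : finrank K ↥(U j ⊔ W j) ≤ n := hn ▸ Submodule.finrank_le _
    rw [← hUf j, hcard] at h1
    have hrj := hrle j
    generalize (d - 1) * n = m at h1 hsum
    omega
  -- order facts
  have hW₀le : ∀ i, W₀ ≤ W i := fun i => hW₀ ▸ iInf_le _ i
  have hU'leU : ∀ j, U' j ≤ U j := fun j => (hcompl j) ▸ le_sup_right
  have hUleW : ∀ j i, i ≠ j → U j ≤ W i := fun j i h => (hU j) ▸ iInf₂_le i h
  have hU'leW : ∀ j i, i ≠ j → U' j ≤ W i := fun j i h => (hU'leU j).trans (hUleW j i h)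
  have hU'W : ∀ j, U' j ⊓ W j = ⊥ := by
    intro j
    rw [← hdisj j]
    apply le_antisymm
    · exact le_inf (le_trans (le_inf (inf_le_left.trans (hU'leU j)) inf_le_right)
        (hW₀U j).le) inf_le_left
    · exact le_inf inf_le_right ((hW₀le j).trans' inf_le_left)
  -- dimension of `U' j`
  have hdimU' : ∀ j, finrank K ↥(U' j) + r j = n := by
    intro j
    have h2 := Submodule.finrank_sup_add_finrank_inf_eq W₀ (U' j)
    rw [hcompl j, hdisj j, finrank_bot, hdimW₀] at h2
    have := hdimU j
    omega
  -- dimension of finite sups of the `U' j`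
  have hsupfin : ∀ s : Finset (Fin d),
      finrank K ↥(⨆ j ∈ s, U' j) = ∑ j ∈ s, finrank K ↥(U' j) := by
    intro s
    induction s using Finset.cons_induction with
    | empty => simp
    | cons a s ha ih =>
      have h1 : (⨆ j ∈ Finset.cons a s ha, U' j) = U' a ⊔ ⨆ j ∈ s, U' j := by
        rw [Finset.cons_eq_insert, Finset.iSup_insert]
      have hle : (⨆ j ∈ s, U' j) ≤ W a :=
        iSup₂_le fun j hj => hU'leW j a (fun h => ha (h ▸ hj))
      have hd2 : U' a ⊓ (⨆ j ∈ s, U' j) = ⊥ :=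
        le_bot_iff.mp ((hU'W a) ▸ inf_le_inf_left _ hle)
      have h2 := Submodule.finrank_sup_add_finrank_inf_eq (U' a) (⨆ j ∈ s, U' j)
      rw [hd2, finrank_bot, ih] at h2
      rw [Finset.sum_cons, h1]
      omega
  have hsupU' : (⨆ j, U' j) = ⨆ j ∈ Finset.univ, U' j := by simp
  -- total dimension of `⨆ j, U' j`
  have hsum' : (∑ j, finrank K ↥(U' j)) + r₀ = n := by
    have h1 : (∑ j, (finrank K ↥(U' j) + r j)) = ∑ _j : Fin d, n :=
      Finset.sum_congr rfl fun j _ => hdimU' j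
    rw [Finset.sum_add_distrib, hr₀, Finset.sum_const, Finset.card_univ,
      Fintype.card_fin, smul_eq_mul] at h1
    have h2 : d * n = (d - 1) * n + n := by
      conv_lhs => rw [← Nat.sub_add_cancel (by omega : 1 ≤ d)]
      ring
    generalize (d - 1) * n = m at h1 h2
    omega
  have hdimsup : finrank K ↥(⨆ j, U' j) + r₀ = n := by
    rw [hsupU', hsupfin]; exact hsum'
  -- `W₀` is disjoint from the sup of the `U' j`
  have hdisjW₀ : W₀ ⊓ (⨆ j, U' j) = ⊥ := by
    rw [eq_bot_iff]
    rintro x hx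
    obtain ⟨hx₀, hxs⟩ := Submodule.mem_inf.mp hx
    rw [hsupU'] at hxs
    obtain ⟨μ, hμ⟩ := (Submodule.mem_iSup_finset_iff_exists_sum _ _).mp hxs
    have hμ0 : ∀ k, (μ k : V) = 0 := by
      intro k
      have hmem : (μ k : V) ∈ W k := by
        have heq : (μ k : V) = x - ∑ j ∈ Finset.univ.erase k, (μ j : V) := by
          rw [← hμ, ← Finset.sum_erase_add _ _ (Finset.mem_univ k)]
          abel
        rw [heq]
        refine Submodule.sub_mem _ (hW₀le k hx₀) (Submodule.sum_mem _ fun j hj => ?_)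
        exact hU'leW j k (Finset.mem_erase.mp hj).1.symm (μ j).2
      have : (μ k : V) ∈ U' k ⊓ W k := ⟨(μ k).2, hmem⟩
      rw [hU'W k] at this
      simpa using this
    have : x = 0 := by
      rw [← hμ]
      exact Finset.sum_eq_zero fun j _ => hμ0 j
    simp [this]
  -- the sup of everything is the whole space
  have htop : W₀ ⊔ (⨆ j, U' j) = ⊤ := by
    apply Submodule.eq_top_of_finrank_eq
    have h2 := Submodule.finrank_sup_add_finrank_inf_eq W₀ (⨆ j, U' j)
    rw [hdisjW₀, finrank_bot, hdimW₀] at h2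
    omega
  refine ⟨fun j => by have := hdimU j; have := hrle j; omega, ?_⟩
  rw [DirectSum.isInternal_submodule_iff_iSupIndep_and_iSup_eq_top]
  constructor
  · rw [iSupIndep_def]
    intro o
    match o with
    | none =>
      have hrw : (⨆ (j : Option (Fin d)) (_ : j ≠ none),
          (fun o : Option (Fin d) => o.elim W₀ U') j) = ⨆ b, U' b := by
        rw [iSup_option (f := fun j : Option (Fin d) =>
          ⨆ _ : j ≠ none, (fun o : Option (Fin d) => o.elim W₀ U') j)]
        simp
      rw [hrw]
      exact disjoint_iff.mpr hdisjW₀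
    | some k =>
      have hle : (⨆ (j : Option (Fin d)) (_ : j ≠ some k),
          (fun o : Option (Fin d) => o.elim W₀ U') j) ≤ W k := by
        refine iSup_le fun o => iSup_le fun ho => ?_
        match o with
        | none => exact hW₀le k
        | some b => exact hU'leW b k (fun h => ho (by rw [h]))
      exact Disjoint.mono_right hle (disjoint_iff.mpr (hU'W k))
  · rw [iSup_option_elim]
    exact htop
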